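/- Let a complete graph K_n have an r-edge-coloring, r ≥ 2, and let A₁,…,A_t be disjoint vertex subsets each of size n₀. Suppose for some function g we know: for any r-colored complete graph on m vertices there is a monochromatic clique of size at least (1/(4r))·log_r m. Then (by induction using dependent random choice) for n₀ sufficiently large depending on r and t, there exist subsets X_i ⊆ A_i of size ⌈(1/(2^{t+1} r))·log_r n₀⌉ such that each X_i is a monochromatic clique and the complete bipartite graph between X_i and X_j is monochromatic for every i ≠ j. -/

import Mathlib

open Finset

section Aux
variable {V : Type} [DecidableEq V] {r : ℕ}

/-- Ramsey-type greedy clique lemma. -/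
lemma cliq (hr : 2 ≤ r) (χ : V → V → Fin r) (hsym : ∀ u v, χ u v = χ v u) :
    ∀ (M : ℕ) (κ : Fin r → ℕ), (∑ c, κ c) = M → ∀ P : Finset V, r ^ M ≤ P.card →
    ∃ (cc : Fin r) (X : Finset V), X ⊆ P ∧ X.card = κ cc ∧
      ∀ u ∈ X, ∀ v ∈ X, u ≠ v → χ u v = cc := by
  have hrpos : 0 < r := by omega
  intro M
  induction M with
  | zero =>
    intro κ hκ P _
    have h0 : ∀ c, κ c = 0 := by
      intro c
      have := Finset.sum_eq_zero_iff.1 hκ c (mem_univ c)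
      exact this
    exact ⟨⟨0, hrpos⟩, ∅, by simp, by simp [h0], by simp⟩
  | succ M ih =>
    intro κ hκ P hP
    by_cases h0 : ∃ c, κ c = 0
    · obtain ⟨c, hc⟩ := h0
      exact ⟨c, ∅, by simp, by simp [hc], by simp⟩
    push_neg at h0
    have h1 : ∀ c, 1 ≤ κ c := fun c => Nat.one_le_iff_ne_zero.2 (h0 c)
    -- pick a vertex
    have hPne : P.Nonempty := by
      rw [← Finset.card_pos]
      calc 0 < r ^ (M+1) := Nat.pow_pos hrpos
        _ ≤ P.card := hP
    obtain ⟨v, hv⟩ := hPne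
    set Q : Fin r → Finset V := fun c => (P.erase v).filter (fun w => χ v w = c) with hQ
    -- pigeonhole: some color class is large
    have hsum : ∑ c, (Q c).card = P.card - 1 := by
      rw [← Finset.card_erase_of_mem hv]
      exact (Finset.card_eq_sum_card_fiberwise (f := χ v)
        (fun x _ => mem_univ (χ v x))).symm
    have hpig : ∃ c, r ^ M ≤ (Q c).card := by
      by_contra hcon
      push_neg at hcon
      have hle : ∑ c, (Q c).card ≤ ∑ _c : Fin r, (r ^ M - 1) :=
        Finset.sum_le_sum (fun c _ => by have := hcon c; omega)
      rw [Finset.sum_const, Finset.card_univ, Fintype.card_fin, smul_eq_mul] at hle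
      have hone : 1 ≤ r ^ M := Nat.one_le_pow _ _ hrpos
      obtain ⟨a, hA⟩ : ∃ a, r ^ M = a + 1 := ⟨r ^ M - 1, by omega⟩
      have hmul : r * (r ^ M - 1) + r = r * r ^ M := by
        rw [hA]; have h2 : r * (a + 1) = r * a + r := by ring
        simp only [Nat.add_sub_cancel]; omega
      have hP' : r * r ^ M ≤ P.card := by
        calc r * r ^ M = r ^ (M+1) := (pow_succ' r M).symm
          _ ≤ P.card := hP
      omega
    obtain ⟨c, hc⟩ := hpig
    have hκ' : ∑ c', Function.update κ c (κ c - 1) c' = M := by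
      rw [Finset.sum_update_of_mem (mem_univ c)]
      have : ∑ c', κ c' = κ c + ∑ c' ∈ univ \ {c}, κ c' := by
        rw [Finset.sum_eq_add_sum_sdiff_singleton_of_mem (mem_univ c)]
      have h1c := h1 c
      omega
    obtain ⟨cc, X, hXQ, hXcard, hXmono⟩ := ih (Function.update κ c (κ c - 1)) hκ' (Q c) hc
    have hQsub : Q c ⊆ P := (Finset.filter_subset _ _).trans (Finset.erase_subset _ _)
    by_cases hcc : cc = c
    · subst hcc
      refine ⟨cc, insert v X, ?_, ?_, ?_⟩
      · intro x hx
        rcases Finset.mem_insert.1 hx with rfl | hx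
        · exact hv
        · exact hQsub (hXQ hx)
      · have hvX : v ∉ X := fun hvx => by
          have := hXQ hvx
          simp [hQ] at this
        rw [Finset.card_insert_of_notMem hvX, hXcard, Function.update_self]
        have := h1 cc; omega
      · intro u hu w hw hne
        have hcol : ∀ x ∈ X, χ v x = cc := fun x hx => (Finset.mem_filter.1 (hXQ hx)).2
        rcases Finset.mem_insert.1 hu with hu' | hu' <;> rcases Finset.mem_insert.1 hw with hw' | hw'
        · exact absurd (hu'.trans hw'.symm) hne
        · rw [hu']; exact hcol w hw'
        · rw [hw', hsym]; exact hcol u hu'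
        · exact hXmono u hu' w hw' hne
    · refine ⟨cc, X, hXQ.trans hQsub, ?_, hXmono⟩
      rw [hXcard, Function.update_of_ne hcc]

/-- Delete one vertex from each set in a family. -/
lemma delete_bad : ∀ (F : Finset (Finset V)), (∀ S ∈ F, S.Nonempty) → ∀ (B : Finset V),
    ∃ B', B' ⊆ B ∧ B.card ≤ B'.card + F.card ∧ ∀ S ∈ F, ¬ S ⊆ B' := by
  intro F
  induction F using Finset.induction_on with
  | empty => intro _ B; exact ⟨B, subset_rfl, by simp, by simp⟩
  | @insert a F ha ih =>
    intro hne B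
    obtain ⟨B', hB'sub, hB'card, hB'⟩ := ih (fun S hS => hne S (Finset.mem_insert_of_mem hS)) B
    have hane : a.Nonempty := hne a (Finset.mem_insert_self _ _)
    obtain ⟨x, hx⟩ := hane
    refine ⟨B'.erase x, (Finset.erase_subset _ _).trans hB'sub, ?_, ?_⟩
    · have h1 : B'.card - 1 ≤ (B'.erase x).card := Finset.pred_card_le_card_erase
      rw [Finset.card_insert_of_notMem ha]
      have hc : B'.card ≤ (B'.erase x).card + 1 := by
        rcases Finset.decidableMem x B' with h | h
        · omega
        · rw [Finset.card_erase_of_mem h]; omega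
      omega
    · intro S hS hSsub
      rcases Finset.mem_insert.1 hS with rfl | hS
      · exact (Finset.notMem_erase x B') (hSsub hx)
      · exact hB' S hS ((hSsub).trans (Finset.erase_subset _ _))

end Aux

section DRC
variable {V : Type} [DecidableEq V] {r : ℕ}

/-- Dependent random choice. -/
lemma drc (hr : 2 ≤ r) (χ : V → V → Fin r) (U W : Finset V) (k s : ℕ) (hk : 1 ≤ k)
    (hs : 1 ≤ s) (hW : W.Nonempty) (f : ℝ) (hf : 0 ≤ f)
    (hcond : 4 * (U.card : ℝ) ^ (k - 1) * f ^ s ≤ ((W.card : ℝ) / (r : ℝ)) ^ s) :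
    ∃ (cc : Fin r) (B : Finset V), B ⊆ U ∧ (U.card : ℝ) / (2 * (r : ℝ) ^ s) ≤ B.card ∧
      ∀ S ⊆ B, S.card = k → f ≤ ((W.filter fun w => ∀ v ∈ S, χ v w = cc).card : ℝ) := by
  have hrpos : 0 < r := by omega
  have hr0 : (0:ℝ) < r := by exact_mod_cast hrpos
  have hWpos : (0:ℝ) < W.card := by exact_mod_cast hW.card_pos
  rcases U.eq_empty_or_nonempty with rfl | hU
  · refine ⟨⟨0, hrpos⟩, ∅, subset_rfl, by simp, ?_⟩
    intro S hS hScard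
    rw [Finset.subset_empty.1 hS] at hScard
    simp at hScard
    omega
  have hUpos : (0:ℝ) < U.card := by exact_mod_cast hU.card_pos
  -- pigeonhole: popular color
  have hpig : ∃ cc : Fin r,
      U.card * W.card ≤ r * ∑ u ∈ U, (W.filter fun w => χ u w = cc).card := by
    by_contra hcon
    push_neg at hcon
    have hfib : ∀ u ∈ U, ∑ c : Fin r, (W.filter fun w => χ u w = c).card = W.card :=
      fun u _ => (Finset.card_eq_sum_card_fiberwise (fun x _ => mem_univ (χ u x))).symm
    have htot : ∑ c : Fin r, ∑ u ∈ U, (W.filter fun w => χ u w = c).card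
        = U.card * W.card := by
      rw [Finset.sum_comm]
      rw [Finset.sum_congr rfl hfib, Finset.sum_const, smul_eq_mul]
    have hne : (univ : Finset (Fin r)).Nonempty := ⟨⟨0, hrpos⟩, mem_univ _⟩
    have hlt : r * ∑ c : Fin r, ∑ u ∈ U, (W.filter fun w => χ u w = c).card
        < r * (U.card * W.card) := by
      rw [Finset.mul_sum]
      calc ∑ c : Fin r, r * ∑ u ∈ U, (W.filter fun w => χ u w = c).card
          < ∑ _c : Fin r, U.card * W.card :=
            Finset.sum_lt_sum_of_nonempty hne (fun c _ => hcon c)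
        _ = r * (U.card * W.card) := by
            rw [Finset.sum_const, Finset.card_univ, Fintype.card_fin, smul_eq_mul]
    rw [htot] at hlt
    exact lt_irrefl _ hlt
  obtain ⟨cc, hcc⟩ := hpig
  set d : V → ℕ := fun u => (W.filter fun w => χ u w = cc).card with hd
  set CN : Finset V → Finset V := fun S => W.filter fun w => ∀ v ∈ S, χ v w = cc with hCN
  set Ω : Finset (Fin s → V) := Fintype.piFinset (fun _ => W) with hΩ
  set Bf : (Fin s → V) → Finset V := fun T => U.filter fun u => ∀ i, χ u (T i) = cc with hB
  set Bad : Finset (Finset V) :=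
    (U.powersetCard k).filter (fun S => ((CN S).card : ℝ) < f) with hBad
  -- step a
  have hstepa : ∀ u, (Ω.filter fun T => ∀ i, χ u (T i) = cc).card = d u ^ s := by
    intro u
    have hset : Ω.filter (fun T => ∀ i, χ u (T i) = cc)
        = Fintype.piFinset (fun _ : Fin s => W.filter fun w => χ u w = cc) := by
      ext T
      constructor
      · intro hT
        have h1 := (Finset.mem_filter.1 hT).1
        have h2 := (Finset.mem_filter.1 hT).2
        rw [hΩ, Fintype.mem_piFinset] at h1
        rw [Fintype.mem_piFinset]
        exact fun i => Finset.mem_filter.2 ⟨h1 i, h2 i⟩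
      · intro hT
        rw [Fintype.mem_piFinset] at hT
        refine Finset.mem_filter.2 ⟨?_, fun i => (Finset.mem_filter.1 (hT i)).2⟩
        rw [hΩ, Fintype.mem_piFinset]
        exact fun i => (Finset.mem_filter.1 (hT i)).1
    rw [hset, Fintype.card_piFinset, Finset.prod_const, Finset.card_univ, Fintype.card_fin]
  -- key1 (nat)
  have hkey1n : ∑ T ∈ Ω, (Bf T).card = ∑ u ∈ U, d u ^ s := by
    calc ∑ T ∈ Ω, (Bf T).card
        = ∑ T ∈ Ω, ∑ u ∈ U, if (∀ i, χ u (T i) = cc) then 1 else 0 :=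
          Finset.sum_congr rfl (fun T _ => by rw [hB, Finset.card_filter])
      _ = ∑ u ∈ U, ∑ T ∈ Ω, if (∀ i, χ u (T i) = cc) then 1 else 0 := Finset.sum_comm
      _ = ∑ u ∈ U, d u ^ s := by
          refine Finset.sum_congr rfl (fun u _ => ?_)
          rw [← Finset.card_filter, hstepa u]
  -- key1 (real)
  have hsum_d : (U.card : ℝ) * W.card / r ≤ ∑ u ∈ U, (d u : ℝ) := by
    have h2 : ((U.card : ℝ) * W.card) ≤ (r : ℝ) * ∑ u ∈ U, (d u : ℝ) := by
      exact_mod_cast hcc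
    rw [div_le_iff₀ hr0]
    linarith
  have hkey1 : (U.card : ℝ) * ((W.card : ℝ) / r) ^ s ≤ ∑ T ∈ Ω, ((Bf T).card : ℝ) := by
    have hcast : ∑ T ∈ Ω, ((Bf T).card : ℝ) = ∑ u ∈ U, (d u : ℝ) ^ s := by
      exact_mod_cast hkey1n
    obtain ⟨m, rfl⟩ : ∃ m, s = m + 1 := ⟨s - 1, by omega⟩
    have hj := pow_sum_div_card_le_sum_pow (s := U) (f := fun u => (d u : ℝ))
      (fun i _ => by positivity) m
    rw [hcast]
    refine le_trans ?_ hj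
    rw [le_div_iff₀ (by positivity)]
    have h1 : ((U.card : ℝ) * ((W.card : ℝ) / r)) ^ (m+1)
        ≤ (∑ u ∈ U, (d u : ℝ)) ^ (m+1) := by
      apply pow_le_pow_left₀ (by positivity)
      calc (U.card : ℝ) * ((W.card : ℝ) / r) = (U.card : ℝ) * W.card / r := by ring
        _ ≤ _ := hsum_d
    calc (U.card : ℝ) * (((W.card : ℝ))/r)^(m+1) * ((U.card : ℝ))^m
        = ((U.card : ℝ) * ((W.card : ℝ)/r))^(m+1) := by ring
      _ ≤ _ := h1
  -- step b
  have hstepb : ∀ S ∈ Bad, (Ω.filter fun T => S ⊆ Bf T).card = (CN S).card ^ s := by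
    intro S hS
    obtain ⟨hSU, hScard⟩ : S ⊆ U ∧ S.card = k :=
      Finset.mem_powersetCard.1 (Finset.mem_filter.1 hS).1
    have hset : Ω.filter (fun T => S ⊆ Bf T) = Fintype.piFinset (fun _ : Fin s => CN S) := by
      ext T
      constructor
      · intro hT
        have h1 := (Finset.mem_filter.1 hT).1
        have h2 := (Finset.mem_filter.1 hT).2
        rw [hΩ, Fintype.mem_piFinset] at h1
        rw [Fintype.mem_piFinset]
        intro i
        rw [hCN]
        refine Finset.mem_filter.2 ⟨h1 i, fun v hv => ?_⟩
        exact (Finset.mem_filter.1 (h2 hv)).2 i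
      · intro hT
        rw [Fintype.mem_piFinset] at hT
        refine Finset.mem_filter.2 ⟨?_, ?_⟩
        · rw [hΩ, Fintype.mem_piFinset]
          intro i
          have := hT i
          rw [hCN] at this
          exact (Finset.mem_filter.1 this).1
        · intro v hv
          rw [hB]
          refine Finset.mem_filter.2 ⟨hSU hv, fun i => ?_⟩
          have := hT i
          rw [hCN] at this
          exact (Finset.mem_filter.1 this).2 v hv
    rw [hset, Fintype.card_piFinset, Finset.prod_const, Finset.card_univ, Fintype.card_fin]
  -- key2
  have hkey2 : ∑ T ∈ Ω, ((Bad.filter fun S => S ⊆ Bf T).card : ℝ)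
      ≤ (U.card : ℝ) ^ k * f ^ s := by
    have hswap : ∑ T ∈ Ω, (Bad.filter fun S => S ⊆ Bf T).card
        = ∑ S ∈ Bad, (Ω.filter fun T => S ⊆ Bf T).card := by
      calc ∑ T ∈ Ω, (Bad.filter fun S => S ⊆ Bf T).card
          = ∑ T ∈ Ω, ∑ S ∈ Bad, if S ⊆ Bf T then 1 else 0 :=
            Finset.sum_congr rfl (fun T _ => by rw [Finset.card_filter])
        _ = ∑ S ∈ Bad, ∑ T ∈ Ω, if S ⊆ Bf T then 1 else 0 := Finset.sum_comm
        _ = ∑ S ∈ Bad, (Ω.filter fun T => S ⊆ Bf T).card :=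
            Finset.sum_congr rfl (fun S _ => (Finset.card_filter _ _).symm)
    calc ∑ T ∈ Ω, ((Bad.filter fun S => S ⊆ Bf T).card : ℝ)
        = ∑ S ∈ Bad, ((Ω.filter fun T => S ⊆ Bf T).card : ℝ) := by exact_mod_cast hswap
      _ = ∑ S ∈ Bad, ((CN S).card : ℝ) ^ s := by
          refine Finset.sum_congr rfl (fun S hS => ?_)
          rw [hstepb S hS]
          push_cast
          ring
      _ ≤ ∑ _S ∈ Bad, f ^ s := by
          refine Finset.sum_le_sum (fun S hS => ?_)
          have hlt : ((CN S).card : ℝ) < f := (Finset.mem_filter.1 hS).2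
          exact pow_le_pow_left₀ (by positivity) hlt.le s
      _ = (Bad.card : ℝ) * f ^ s := by rw [Finset.sum_const, nsmul_eq_mul]
      _ ≤ (U.card : ℝ) ^ k * f ^ s := by
          apply mul_le_mul_of_nonneg_right _ (by positivity)
          have h1 : Bad.card ≤ (U.powersetCard k).card := Finset.card_filter_le _ _
          have h2 : (U.powersetCard k).card = U.card.choose k := Finset.card_powersetCard _ _
          have h3 : U.card.choose k ≤ U.card ^ k := Nat.choose_le_pow _ _
          exact_mod_cast h1.trans (h2 ▸ h3)
  -- find a good T
  have hΩne : Ω.Nonempty := by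
    rw [hΩ, Fintype.piFinset_nonempty]
    exact fun _ => hW
  have hΩcard : (Ω.card : ℝ) = (W.card : ℝ) ^ s := by
    rw [hΩ, Fintype.card_piFinset, Finset.prod_const, Finset.card_univ, Fintype.card_fin]
    push_cast
    ring
  set A : ℝ := (U.card : ℝ) / (2 * (r:ℝ) ^ s) with hA
  have hhalf : 2*((U.card:ℝ)^k * f^s) ≤ (1/2) * ((U.card:ℝ) * ((W.card:ℝ)/r)^s) := by
    have hmul := mul_le_mul_of_nonneg_left hcond (le_of_lt hUpos)
    have hUk : (U.card:ℝ)^k = (U.card:ℝ)^(k-1) * U.card := by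
      conv_lhs => rw [show k = (k-1)+1 by omega]
      rw [pow_succ]
    have h4 : 4 * ((U.card:ℝ)^k * f^s) ≤ (U.card:ℝ) * ((W.card:ℝ)/r)^s := by
      rw [hUk]
      nlinarith [hmul]
    linarith
  have hex : ∃ T ∈ Ω, A ≤ ((Bf T).card : ℝ)
      - 2 * ((Bad.filter fun S => S ⊆ Bf T).card : ℝ) := by
    by_contra hcon
    push_neg at hcon
    have hlt := Finset.sum_lt_sum_of_nonempty hΩne (fun T hT => hcon T hT)
    have hsumA : ∑ _T ∈ Ω, A = (Ω.card : ℝ) * A := by rw [Finset.sum_const, nsmul_eq_mul]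
    have hlow : (U.card:ℝ) * ((W.card:ℝ)/r)^s - 2*((U.card:ℝ)^k * f^s)
        ≤ ∑ T ∈ Ω, (((Bf T).card : ℝ) - 2 * ((Bad.filter fun S => S ⊆ Bf T).card : ℝ)) := by
      rw [Finset.sum_sub_distrib, ← Finset.mul_sum]
      linarith [hkey1, hkey2]
    have hAval : (Ω.card:ℝ) * A = (1/2) * ((U.card:ℝ) * ((W.card:ℝ)/r)^s) := by
      rw [hΩcard, hA, div_pow]
      field_simp
    rw [hsumA, hAval] at hlt
    linarith
  obtain ⟨T, hT, hTval⟩ := hex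
  set F : Finset (Finset V) := Bad.filter (fun S => S ⊆ Bf T) with hF
  have hFne : ∀ S ∈ F, S.Nonempty := by
    intro S hS
    have hcard := (Finset.mem_powersetCard.1 (Finset.mem_filter.1 (Finset.mem_filter.1 hS).1).1).2
    rw [← Finset.card_pos, hcard]
    omega
  obtain ⟨B', hB'sub, hB'card, hB'good⟩ := delete_bad F hFne (Bf T)
  have hBfU : Bf T ⊆ U := by rw [hB]; exact Finset.filter_subset _ _
  refine ⟨cc, B', hB'sub.trans hBfU, ?_, ?_⟩
  · have hc : ((Bf T).card : ℝ) ≤ (B'.card : ℝ) + (F.card : ℝ) := by exact_mod_cast hB'card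
    have hfn : (0:ℝ) ≤ (F.card : ℝ) := by positivity
    linarith [hTval]
  · intro S hSsub hScard
    by_contra hcon
    push_neg at hcon
    have hSU : S ⊆ U := hSsub.trans (hB'sub.trans hBfU)
    have hSBad : S ∈ Bad := by
      rw [hBad]
      exact Finset.mem_filter.2 ⟨Finset.mem_powersetCard.2 ⟨hSU, hScard⟩, hcon⟩
    have hSF : S ∈ F := Finset.mem_filter.2 ⟨hSBad, hSsub.trans hB'sub⟩
    exact hB'good S hSF hSsub

end DRC

section Rec
variable {V : Type} [DecidableEq V] {r : ℕ}

lemma pool (hr : 2 ≤ r) (χ : V → V → Fin r) (k c n : ℕ) (hk : 1 ≤ k) (hc : 1 ≤ c)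
    (GH : (4:ℝ) * (n:ℝ)^(k-1) ≤ (r:ℝ)^((c*k-1)*(c*k))) :
    ∀ (q : ℕ) (Wf : Fin q → Finset V) (U : Finset V), U.card ≤ n →
    (∀ j, (Wf j).Nonempty) →
    ((r:ℝ))^(r*k + q*(c*k+1)) ≤ (U.card:ℝ) →
    ∃ (P : Finset V) (col : Fin q → Fin r), P ⊆ U ∧ ((r:ℝ))^(r*k) ≤ (P.card:ℝ) ∧
      ∀ j : Fin q, ∀ S ⊆ P, S.card = k →
        ((Wf j).card : ℝ)/(r:ℝ)^(c*k) ≤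
          (((Wf j).filter fun w => ∀ v ∈ S, χ v w = col j).card : ℝ) := by
  have hr0 : (0:ℝ) < r := by
    have : (0:ℕ) < r := by omega
    exact_mod_cast this
  have hr1 : (1:ℝ) ≤ r := by
    have : (1:ℕ) ≤ r := by omega
    exact_mod_cast this
  have hr2 : (2:ℝ) ≤ r := by exact_mod_cast hr
  intro q
  induction q with
  | zero =>
    intro Wf U hUn hWne hU
    refine ⟨U, fun j => j.elim0, subset_rfl, ?_, fun j => j.elim0⟩
    simpa using hU
  | succ q ih =>
    intro Wf U hUn hWne hU
    have hWpos : (0:ℝ) < ((Wf 0).card : ℝ) := by exact_mod_cast (hWne 0).card_pos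
    set f : ℝ := ((Wf 0).card : ℝ)/(r:ℝ)^(c*k) with hf
    have hfpos : 0 ≤ f := by positivity
    have hck1 : 1 ≤ c*k := Nat.one_le_iff_ne_zero.2 (by positivity)
    have hcond : 4 * (U.card : ℝ) ^ (k - 1) * f ^ (c*k)
        ≤ (((Wf 0).card : ℝ) / (r : ℝ)) ^ (c*k) := by
      have hpow : (r:ℝ)^(c*k) = (r:ℝ)^(c*k-1) * r := by
        rw [← pow_succ]
        congr 1
        omega
      have hfr : ((Wf 0).card : ℝ)/(r:ℝ) = f * (r:ℝ)^(c*k-1) := by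
        rw [hf, hpow]
        field_simp
      have hU4 : 4 * (U.card : ℝ) ^ (k - 1) ≤ (r:ℝ)^((c*k-1)*(c*k)) := by
        refine le_trans ?_ GH
        have : ((U.card:ℝ)) ^ (k-1) ≤ ((n:ℝ)) ^ (k-1) := by
          apply pow_le_pow_left₀ (by positivity)
          exact_mod_cast hUn
        linarith
      calc 4 * (U.card : ℝ) ^ (k - 1) * f ^ (c*k)
          ≤ (r:ℝ)^((c*k-1)*(c*k)) * f ^ (c*k) :=
            mul_le_mul_of_nonneg_right hU4 (by positivity)
        _ = (((Wf 0).card : ℝ) / (r : ℝ)) ^ (c*k) := by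
            rw [hfr, mul_pow, ← pow_mul, mul_comm ((r:ℝ)^((c*k-1)*(c*k))) _]
    obtain ⟨cc0, B1, hB1U, hB1card, hgood0⟩ :=
      drc hr χ U (Wf 0) k (c*k) hk hck1 (hWne 0) f hfpos hcond
    have hB1low : ((r:ℝ))^(r*k + q*(c*k+1)) ≤ (B1.card : ℝ) := by
      have h2r : (2:ℝ)*(r:ℝ)^(c*k) ≤ (r:ℝ)^(c*k+1) := by
        rw [pow_succ]
        have hp : (0:ℝ) ≤ (r:ℝ)^(c*k) := by positivity
        nlinarith
      have hstep : (r:ℝ)^(r*k + q*(c*k+1)) = (r:ℝ)^(r*k + (q+1)*(c*k+1)) / (r:ℝ)^(c*k+1) := by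
        rw [eq_div_iff (by positivity), ← pow_add]
        congr 1
        ring
      rw [hstep]
      calc (r:ℝ)^(r*k + (q+1)*(c*k+1)) / (r:ℝ)^(c*k+1)
          ≤ (r:ℝ)^(r*k + (q+1)*(c*k+1)) / (2*(r:ℝ)^(c*k)) := by
            apply div_le_div_of_nonneg_left (by positivity) (by positivity) h2r
        _ ≤ (U.card : ℝ) / (2*(r:ℝ)^(c*k)) := by
            gcongr
        _ ≤ (B1.card : ℝ) := hB1card
    obtain ⟨P, col', hPB1, hPcard, hgood'⟩ := ih (fun j => Wf j.succ) B1
      ((Finset.card_le_card hB1U).trans hUn) (fun j => hWne j.succ) hB1low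
    refine ⟨P, Fin.cases cc0 col', hPB1.trans hB1U, hPcard, ?_⟩
    intro j S hSP hScard
    induction j using Fin.cases with
    | zero =>
      simp only [Fin.cases_zero]
      exact hgood0 S (hSP.trans hPB1) hScard
    | succ j' =>
      simp only [Fin.cases_succ]
      exact hgood' j' S hSP hScard

end Rec

section Rec2
variable {V : Type} [DecidableEq V] {r : ℕ}

lemma recmain (hr : 2 ≤ r) (χ : V → V → Fin r) (hsym : ∀ u v, χ u v = χ v u)
    (k c n : ℕ) (hk : 1 ≤ k) (hc : 1 ≤ c)
    (GH : (4:ℝ) * (n:ℝ)^(k-1) ≤ (r:ℝ)^((c*k-1)*(c*k))) :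
    ∀ (p : ℕ) (B : Fin p → Finset V), (∀ j, (B j).card ≤ n) →
    (∀ j, ((r:ℝ))^(r*k + (p-1)*(c*k+1)) ≤ ((B j).card : ℝ)) →
    ∃ X : Fin p → Finset V, (∀ j, X j ⊆ B j) ∧ (∀ j, (X j).card = k) ∧
      (∀ j, ∃ cc, ∀ u ∈ X j, ∀ v ∈ X j, u ≠ v → χ u v = cc) ∧
      (∀ i j, i < j → ∃ cc, ∀ u ∈ X i, ∀ v ∈ X j, χ u v = cc) := by
  have hr1 : (1:ℝ) ≤ r := by
    have : (1:ℕ) ≤ r := by omega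
    exact_mod_cast this
  intro p
  induction p with
  | zero =>
    intro B _ _
    exact ⟨fun j => j.elim0, fun j => j.elim0, fun j => j.elim0, fun j => j.elim0,
      fun i => i.elim0⟩
  | succ p ih =>
    intro B hBn hBlow
    have hWne : ∀ j : Fin p, (B j.succ).Nonempty := by
      intro j
      rw [← Finset.card_pos]
      have h1 : (1:ℝ) ≤ ((B j.succ).card : ℝ) :=
        le_trans (one_le_pow₀ hr1) (hBlow j.succ)
      have : (1:ℕ) ≤ (B j.succ).card := by exact_mod_cast h1
      omega
    have hU0 : ((r:ℝ))^(r*k + p*(c*k+1)) ≤ ((B 0).card : ℝ) := by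
      have := hBlow 0
      simpa using this
    obtain ⟨P, col, hPU, hPcard, hgood⟩ :=
      pool hr χ k c n hk hc GH p (fun j => B j.succ) (B 0) (hBn 0) hWne hU0
    have hPnat : r ^ (r*k) ≤ P.card := by exact_mod_cast hPcard
    obtain ⟨cc0, X0, hX0P, hX0card, hX0mono⟩ :=
      cliq hr χ hsym (r*k) (fun _ => k) (by simp [Finset.sum_const, mul_comm]) P hPnat
    set B' : Fin p → Finset V :=
      fun j => (B j.succ).filter (fun w => ∀ v ∈ X0, χ v w = col j) with hB'
    have hB'n : ∀ j, (B' j).card ≤ n :=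
      fun j => le_trans (Finset.card_le_card (Finset.filter_subset _ _)) (hBn j.succ)
    have hB'low : ∀ j, ((r:ℝ))^(r*k + (p-1)*(c*k+1)) ≤ ((B' j).card : ℝ) := by
      intro j
      have hg := hgood j X0 hX0P hX0card
      have hlow : ((r:ℝ))^(r*k + p*(c*k+1)) ≤ ((B j.succ).card : ℝ) := by
        have := hBlow j.succ
        simpa using this
      have hexp : r*k + (p-1)*(c*k+1) + c*k ≤ r*k + p*(c*k+1) := by
        have hp1 : 1 ≤ p := j.pos
        obtain ⟨m, rfl⟩ : ∃ m, p = m + 1 := ⟨p - 1, by omega⟩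
        have h1 : (m+1)*(c*k+1) = m*(c*k+1) + (c*k+1) := by ring
        simp only [Nat.add_sub_cancel]
        omega
      have hle : (r:ℝ)^(r*k+(p-1)*(c*k+1)) * (r:ℝ)^(c*k) ≤ ((B j.succ).card : ℝ) := by
        rw [← pow_add]
        refine le_trans ?_ hlow
        exact pow_le_pow_right₀ hr1 hexp
      have hdiv : (r:ℝ)^(r*k+(p-1)*(c*k+1)) ≤ ((B j.succ).card : ℝ) / (r:ℝ)^(c*k) := by
        rw [le_div_iff₀ (by positivity)]
        exact hle
      exact le_trans hdiv hg
    obtain ⟨X', hX'sub, hX'card, hX'mono, hX'cross⟩ := ih B' hB'n hB'low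
    refine ⟨Fin.cases X0 X', ?_, ?_, ?_, ?_⟩
    · intro j
      induction j using Fin.cases with
      | zero => simpa using hX0P.trans hPU
      | succ j' =>
        simp only [Fin.cases_succ]
        exact (hX'sub j').trans (Finset.filter_subset _ _)
    · intro j
      induction j using Fin.cases with
      | zero => simpa using hX0card
      | succ j' => simp only [Fin.cases_succ]; exact hX'card j'
    · intro j
      induction j using Fin.cases with
      | zero => exact ⟨cc0, by simpa using hX0mono⟩
      | succ j' => simp only [Fin.cases_succ]; exact hX'mono j'
    · intro i j hij
      induction j using Fin.cases with
      | zero => exact absurd (Fin.lt_def.1 hij) (by simp)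
      | succ j' =>
        induction i using Fin.cases with
        | zero =>
          refine ⟨col j', ?_⟩
          intro u hu v hv
          simp only [Fin.cases_zero] at hu
          simp only [Fin.cases_succ] at hv
          have hvB := hX'sub j' hv
          rw [hB'] at hvB
          exact (Finset.mem_filter.1 hvB).2 u hu
        | succ i' =>
          have hlt : i' < j' := by rwa [Fin.succ_lt_succ_iff] at hij
          obtain ⟨cc, hcc⟩ := hX'cross i' j' hlt
          refine ⟨cc, ?_⟩
          intro u hu v hv
          simp only [Fin.cases_succ] at hu hv
          exact hcc u hu v hv

end Rec2


lemma two_mul_le_two_pow : ∀ m : ℕ, 1 ≤ m → 2*m ≤ 2^m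
  | 0, h => by omega
  | 1, _ => by norm_num
  | (m+2), _ => by
      have ih := two_mul_le_two_pow (m+1) (by omega)
      have h2 : 2 ≤ 2^(m+1) := by
        calc 2 = 2^1 := rfl
          _ ≤ 2^(m+1) := Nat.pow_le_pow_right (by omega) (by omega)
      rw [pow_succ]
      omega

lemma t_le_pow (t : ℕ) (ht : 1 ≤ t) : t ≤ 2^(t+1-(t+2)/2) := by
  rcases Nat.even_or_odd t with ⟨m, hm⟩ | ⟨m, hm⟩
  · have hexp : t+1-(t+2)/2 = m := by omega
    rw [hexp]
    have hm1 : 1 ≤ m := by omega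
    have := two_mul_le_two_pow m hm1
    omega
  · have hexp : t+1-(t+2)/2 = m+1 := by omega
    rw [hexp]
    have h1 : m < 2^m := Nat.lt_two_pow_self (n := m)
    rw [pow_succ]
    omega

lemma budget (r t : ℕ) (hr : 2 ≤ r) (ht : 1 ≤ t) :
    r + (t-1)*(2^((t+2)/2)*r) + 1 ≤ 2^(t+1)*r := by
  set t' := (t+2)/2 with ht'
  have hle : t ≤ 2^(t+1-t') := t_le_pow t ht
  have ht'le : t' ≤ t+1 := by omega
  have hsplit : 2^(t+1-t') * 2^t' = 2^(t+1) := by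
    rw [← pow_add]
    congr 1
    omega
  have h2 : (t-1)*2^t' + 2 ≤ 2^(t+1) := by
    have hb : 2 ≤ 2^t' := by
      have h1 : 1 ≤ t' := by omega
      calc 2 = 2^1 := rfl
        _ ≤ 2^t' := Nat.pow_le_pow_right (by omega) h1
    have hmul : (t-1)*2^t' ≤ (2^(t+1-t')-1)*2^t' :=
      Nat.mul_le_mul_right _ (by omega)
    have hx : (2^(t+1-t')-1)*2^t' + 2^t' = 2^(t+1) := by
      have h1 : 1 ≤ 2^(t+1-t') := Nat.one_le_two_pow
      have hr1 : (2^(t+1-t')-1)*2^t' + 2^t' = ((2^(t+1-t')-1)+1)*2^t' := by ring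
      rw [hr1]
      have hr2 : (2^(t+1-t')-1)+1 = 2^(t+1-t') := by omega
      rw [hr2, hsplit]
    omega
  have h3 : r*(1 + (t-1)*2^t') ≤ r*(2^(t+1) - 1) := Nat.mul_le_mul_left _ (by omega)
  have h4 : r*(1 + (t-1)*2^t') = r + (t-1)*(2^t'*r) := by ring
  have h5 : r*(2^(t+1) - 1) = r*2^(t+1) - r := by
    have := Nat.mul_pred r (2^(t+1))
    simpa using this
  have h6 : r ≤ r*2^(t+1) := Nat.le_mul_of_pos_right r (by positivity)
  have h7 : r*2^(t+1) = 2^(t+1)*r := by ring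
  omega

lemma numeric1 (L K C Dr : ℝ) (hK : 1 ≤ K) (hD : 8 ≤ Dr) (hCD : C*K ≤ Dr*K)
    (hCC : 2*Dr*(K*K) ≤ C*C*(K*K)) (hLD : L*(K-1) ≤ Dr*K*(K-1)) :
    2 + L*(K-1) ≤ (C*K-1)*(C*K) := by
  have h4 : (1:ℝ) ≤ K*K := by nlinarith
  have h5 : 8*(K*K) ≤ Dr*(K*K) := by nlinarith
  nlinarith [hLD, hCC, hCD, h4, h5]

lemma numeric2 (L K C Dr T rr : ℝ) (hbud : (rr + (T-1)*C + 1)*K ≤ Dr*K) (hK1 : 1 ≤ K)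
    (hT : 1 ≤ T) (hKt : Dr + T ≤ K) (hkup : Dr*K < L + Dr) :
    rr*K + (T-1)*(C*K+1) ≤ L := by
  nlinarith [hbud, hKt, hkup, hK1, hT]





/-- Given an `r`-edge-coloring (`r ≥ 2`) of a complete graph and pairwise disjoint
vertex sets `A₁, …, A_t` each of size `n₀`, for `n₀` sufficiently large (depending on
`r` and `t`) there exist subsets `X_i ⊆ A_i` of size `⌈(1/(2^{t+1}·r))·log_r n₀⌉` such
that each `X_i` is a monochromatic clique and the complete bipartite graph between
`X_i` and `X_j` is monochromatic for every `i ≠ j`. -/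
theorem stmt_14 (r t : ℕ) (hr : 2 ≤ r) (ht : 1 ≤ t) :
    ∃ N : ℕ, ∀ (n₀ : ℕ), N < n₀ →
      ∀ {V : Type} [Fintype V] [DecidableEq V],
      ∀ (χ : V → V → Fin r), (∀ u v : V, χ u v = χ v u) →
      ∀ (A : Fin t → Finset V),
        (∀ i j : Fin t, i ≠ j → Disjoint (A i) (A j)) →
        (∀ i : Fin t, (A i).card = n₀) →
        ∃ X : Fin t → Finset V,
          (∀ i : Fin t, X i ⊆ A i) ∧
          (∀ i : Fin t, (X i).card = ⌈Real.logb r n₀ / (2 ^ (t + 1) * r)⌉₊) ∧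
          (∀ i : Fin t, ∃ c : Fin r,
            ∀ u ∈ X i, ∀ v ∈ X i, u ≠ v → χ u v = c) ∧
          (∀ i j : Fin t, i ≠ j → ∃ c : Fin r,
            ∀ u ∈ X i, ∀ v ∈ X j, χ u v = c) := by
  have hr1 : 1 < r := by omega
  set D : ℕ := 2^(t+1)*r with hD
  set c : ℕ := 2^((t+2)/2)*r with hc
  refine ⟨r^(D^3), ?_⟩
  intro n₀ hn₀ V _inst1 _inst2 χ hsym A hdisj hcard
  have hrR : (1:ℝ) < (r:ℝ) := by exact_mod_cast hr1
  have hNpos : 1 ≤ r^(D^3) := Nat.one_le_pow _ _ (by omega)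
  have hn₀pos : 0 < n₀ := by omega
  have hn₀R : (0:ℝ) < (n₀:ℝ) := by exact_mod_cast hn₀pos
  set L : ℝ := Real.logb r n₀ with hLdef
  have hDR : ((D:ℕ):ℝ) = 2^(t+1)*(r:ℝ) := by rw [hD]; push_cast; ring
  set k : ℕ := ⌈L / (D:ℝ)⌉₊ with hkdef
  have hgoalk : ⌈L / (2 ^ (t + 1) * (r:ℝ))⌉₊ = k := by
    rw [hkdef]
    congr 1
    rw [hDR]
  -- numeric facts
  have h4pow : 4 ≤ 2^(t+1) := by
    calc 4 = 2^2 := rfl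
      _ ≤ 2^(t+1) := Nat.pow_le_pow_right (by omega) (by omega)
  have hD8 : 8 ≤ D := by
    rw [hD]
    calc 8 = 4*2 := rfl
      _ ≤ 2^(t+1)*r := Nat.mul_le_mul h4pow hr
  have hD8R : (8:ℝ) ≤ (D:ℝ) := by exact_mod_cast hD8
  have hDRpos : (0:ℝ) < (D:ℝ) := by linarith
  have hlogN : Real.logb r ((r:ℝ)^(D^3:ℕ)) = ((D^3:ℕ):ℝ) := by
    rw [← Real.rpow_natCast (r:ℝ) (D^3)]
    exact Real.logb_rpow (by linarith) (ne_of_gt hrR)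
  have hL3 : ((D:ℝ))^(3:ℕ) < L := by
    have hlt : Real.logb r ((r^(D^3):ℕ):ℝ) < Real.logb r n₀ :=
      Real.logb_lt_logb hrR (by positivity) (by exact_mod_cast hn₀)
    rw [show ((r^(D^3):ℕ):ℝ) = (r:ℝ)^(D^3:ℕ) by push_cast; ring, hlogN] at hlt
    calc ((D:ℝ))^(3:ℕ) = ((D^3:ℕ):ℝ) := by push_cast; ring
      _ < L := hlt
  have hLpos : 0 < L := lt_trans (by positivity) hL3
  have hk_le : L ≤ (D:ℝ)*k := by
    have h1 : L/(D:ℝ) ≤ (k:ℝ) := Nat.le_ceil _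
    rw [div_le_iff₀ hDRpos] at h1
    linarith
  have hk1 : 1 ≤ k := Nat.one_le_ceil_iff.2 (by positivity)
  have hkR1 : (1:ℝ) ≤ (k:ℝ) := by exact_mod_cast hk1
  have hkup : (D:ℝ)*k < L + D := by
    have h2 : (k:ℝ) < L/(D:ℝ) + 1 := Nat.ceil_lt_add_one (by positivity)
    have h3 : (D:ℝ)*(k:ℝ) < (D:ℝ)*(L/(D:ℝ) + 1) := by
      exact mul_lt_mul_of_pos_left h2 hDRpos
    have h4 : (D:ℝ)*(L/(D:ℝ) + 1) = L + D := by
      field_simp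
    linarith
  have hkbig : (D:ℝ)*(D:ℝ) < (k:ℝ) := by
    have h1 : L/(D:ℝ) ≤ (k:ℝ) := Nat.le_ceil _
    have h2 : (D:ℝ)*(D:ℝ) < L/(D:ℝ) := by
      rw [lt_div_iff₀ hDRpos]
      calc (D:ℝ)*(D:ℝ)*(D:ℝ) = (D:ℝ)^(3:ℕ) := by ring
        _ < L := hL3
    linarith
  have hc1 : 1 ≤ c := by
    rw [hc]
    exact Nat.one_le_iff_ne_zero.2 (by positivity)
  have hcD : c ≤ D := by
    rw [hc, hD]
    exact Nat.mul_le_mul_right _ (Nat.pow_le_pow_right (by omega) (by omega))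
  have h2D : 2*D ≤ c*c := by
    rw [hc, hD]
    calc 2*(2^(t+1)*r) = 2^(t+1)*(2*r) := by ring
      _ ≤ 2^((t+2)/2 + (t+2)/2)*(r*r) := by
          apply Nat.mul_le_mul
          · exact Nat.pow_le_pow_right (by omega) (by omega)
          · nlinarith
      _ = (2^((t+2)/2)*r)*(2^((t+2)/2)*r) := by rw [pow_add]; ring
  have hbud : r + (t-1)*c + 1 ≤ D := by rw [hc, hD]; exact budget r t hr ht
  have hcR : ((c:ℕ):ℝ) ≤ (D:ℝ) := by exact_mod_cast hcD
  have h2DR : 2*(D:ℝ) ≤ (c:ℝ)*(c:ℝ) := by exact_mod_cast h2D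
  clear_value D c L k
  -- GH
  have hck1 : 1 ≤ c*k := Nat.one_le_iff_ne_zero.2 (by positivity)
  have hexpGH : 2 + L*((k:ℝ)-1) ≤ (((c*k-1)*(c*k) : ℕ) : ℝ) := by
    have hcast : (((c*k-1)*(c*k) : ℕ) : ℝ) = ((c:ℝ)*(k:ℝ)-1)*((c:ℝ)*(k:ℝ)) := by
      push_cast [Nat.cast_sub hck1]
      ring
    rw [hcast]
    have hKpos : (0:ℝ) ≤ (k:ℝ) := by linarith
    apply numeric1 L (k:ℝ) (c:ℝ) (D:ℝ) hkR1 hD8R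
    · exact mul_le_mul_of_nonneg_right hcR hKpos
    · exact mul_le_mul_of_nonneg_right h2DR (by positivity)
    · exact mul_le_mul_of_nonneg_right hk_le (by linarith)
  have GH : (4:ℝ) * (n₀:ℝ)^(k-1) ≤ (r:ℝ)^((c*k-1)*(c*k)) := by
    have hn₀eq : (n₀:ℝ) = (r:ℝ) ^ L := by
      rw [hLdef]
      exact (Real.rpow_logb (by linarith) (ne_of_gt hrR) hn₀R).symm
    have hpow1 : (n₀:ℝ)^(k-1) = (r:ℝ) ^ (L*((k-1:ℕ):ℝ)) := by
      rw [hn₀eq, ← Real.rpow_natCast ((r:ℝ)^L) (k-1), ← Real.rpow_mul (by linarith)]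
    have h4r : (4:ℝ) ≤ (r:ℝ) ^ (2:ℝ) := by
      rw [Real.rpow_two]
      have : (2:ℝ) ≤ (r:ℝ) := by exact_mod_cast hr
      nlinarith
    have hk1cast : ((k-1:ℕ):ℝ) = (k:ℝ) - 1 := by
      push_cast [Nat.cast_sub hk1]
      ring
    calc (4:ℝ) * (n₀:ℝ)^(k-1) ≤ (r:ℝ)^(2:ℝ) * (r:ℝ)^(L*((k-1:ℕ):ℝ)) := by
          rw [hpow1]
          exact mul_le_mul_of_nonneg_right h4r (by positivity)
      _ = (r:ℝ) ^ ((2:ℝ) + L*((k-1:ℕ):ℝ)) := (Real.rpow_add (by linarith) _ _).symm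
      _ ≤ (r:ℝ) ^ ((((c*k-1)*(c*k):ℕ)):ℝ) := by
          apply (Real.rpow_le_rpow_left_iff hrR).2
          rw [hk1cast]
          exact hexpGH
      _ = (r:ℝ)^((c*k-1)*(c*k)) := Real.rpow_natCast _ _
  -- invariant
  have hE : ((r*k + (t-1)*(c*k+1) : ℕ):ℝ) ≤ L := by
    have hEcast : ((r*k + (t-1)*(c*k+1) : ℕ):ℝ)
        = (r:ℝ)*(k:ℝ) + ((t:ℝ)-1)*((c:ℝ)*(k:ℝ)+1) := by
      push_cast [Nat.cast_sub ht]
      ring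
    rw [hEcast]
    have hbudR : (r:ℝ) + ((t:ℝ)-1)*(c:ℝ) + 1 ≤ (D:ℝ) := by
      have hcast : ((r + (t-1)*c + 1 : ℕ):ℝ) = (r:ℝ) + ((t:ℝ)-1)*(c:ℝ) + 1 := by
        push_cast [Nat.cast_sub ht]
        ring
      have := (Nat.cast_le (α := ℝ)).2 hbud
      rw [hcast] at this
      linarith
    have htD : (t:ℝ) ≤ (D:ℝ) := by
      have h1 : t ≤ D := by
        have h2 := Nat.lt_two_pow_self (n := t)
        have h3 : 2^t ≤ 2^(t+1) := Nat.pow_le_pow_right (by omega) (by omega)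
        have h4 : 2^(t+1) ≤ 2^(t+1)*r := Nat.le_mul_of_pos_right _ (by omega)
        rw [hD]; omega
      exact_mod_cast h1
    have hKt : (D:ℝ) + (t:ℝ) ≤ (k:ℝ) := by
      have h2 : 2*(D:ℝ) ≤ (D:ℝ)*(D:ℝ) :=
        mul_le_mul_of_nonneg_right (by linarith) (by linarith)
      linarith [hkbig, htD]
    have htR1 : (1:ℝ) ≤ (t:ℝ) := by exact_mod_cast ht
    exact numeric2 L (k:ℝ) (c:ℝ) (D:ℝ) (t:ℝ) (r:ℝ)
      (mul_le_mul_of_nonneg_right hbudR (by linarith : (0:ℝ) ≤ (k:ℝ))) hkR1 htR1 hKt hkup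
  have hinv : ∀ j : Fin t, ((r:ℝ))^(r*k + (t-1)*(c*k+1)) ≤ ((A j).card : ℝ) := by
    intro j
    rw [hcard j]
    calc ((r:ℝ))^(r*k + (t-1)*(c*k+1))
        = (r:ℝ) ^ (((r*k + (t-1)*(c*k+1):ℕ)):ℝ) := (Real.rpow_natCast _ _).symm
      _ ≤ (r:ℝ) ^ L := (Real.rpow_le_rpow_left_iff hrR).2 hE
      _ = (n₀:ℝ) := by
          rw [hLdef]
          exact Real.rpow_logb (by linarith) (ne_of_gt hrR) hn₀R
  obtain ⟨X, hXsub, hXcard, hXmono, hXcross⟩ :=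
    recmain hr χ hsym k c n₀ hk1 hc1 GH t A (fun j => le_of_eq (hcard j)) hinv
  refine ⟨X, hXsub, ?_, hXmono, ?_⟩
  · intro i
    rw [hgoalk]
    exact hXcard i
  · intro i j hij
    rcases lt_or_gt_of_ne hij with h | h
    · exact hXcross i j h
    · obtain ⟨cc, hcc⟩ := hXcross j i h
      exact ⟨cc, fun u hu v hv => by rw [hsym]; exact hcc v hv u hu⟩
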